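/- Consider n rigid bodies on a sphere of radius ρ > 0, with differentiable attitude curves Rᵢ : ℝ → M₃(ℝ), Rᵢ(t) ∈ SO(3), satisfying Ṙᵢ(t) = Rᵢ(t)·ω̂ᵢ(t) for Lipschitz continuous ωᵢ : ℝ → ℝ³. Let 0 < D_c < D_a < ρπ/2 and k > 0. Write R_{ij}(t) = Rᵢ(t)ᵀ Rⱼ(t) for the relative attitude. Suppose that for every t ≥ 0 and every pair i ≠ j with e₃ᵀ R_{ij}(t) e₃ ≥ cos(D_a/ρ) (i.e., j is a distance neighbor of i), the distributed condition e₃ᵀ R_{ij}(t)ᵀ ê₃ ωᵢ(t) ≥ k·(e₃ᵀ R_{ij}(t) e₃ − cos(D_c/ρ)) holds. If at time 0 no collisions occur, i.e., e₃ᵀ R_{ij}(0) e₃ ≤ cos(D_c/ρ) for all i ≠ j, then for all t ≥ 0 and all i ≠ j one has e₃ᵀ R_{ij}(t) e₃ ≤ cos(D_c/ρ); equivalently, the geodesic distance ρ·arccos(e₃ᵀ R_{ij}(t) e₃) between every pair of bodies remains at least D_c for all t ≥ 0 (the safe set C is forward invariant). -/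

import Mathlib

open Matrix

/-- The hat map: `hatMap a` is the skew-symmetric matrix with `(hatMap a) *ᵥ b = a ×₃ b`. -/
noncomputable def hatMap (a : Fin 3 → ℝ) : Matrix (Fin 3) (Fin 3) ℝ :=
  !![0, -a 2, a 1; a 2, 0, -a 0; -a 1, a 0, 0]

/-- The third standard basis vector `e₃ = (0,0,1)ᵀ`. -/
def e3 : Fin 3 → ℝ := ![0, 0, 1]

/-- `SO3 R` means `R` is a rotation matrix: `RᵀR = I` and `det R = 1`. -/
def SO3 (R : Matrix (Fin 3) (Fin 3) ℝ) : Prop := Rᵀ * R = 1 ∧ R.det = 1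


lemma entry22 (M : Matrix (Fin 3) (Fin 3) ℝ) : e3 ⬝ᵥ M *ᵥ e3 = M 2 2 := by
  simp [dotProduct, e3, mulVec, Fin.sum_univ_three]

lemma derivId (A B : Matrix (Fin 3) (Fin 3) ℝ) (wi wj : Fin 3 → ℝ) :
    (∑ m : Fin 3, ((A * hatMap wi) m 2 * B m 2 + A m 2 * (B * hatMap wj) m 2))
    = -(e3 ⬝ᵥ ((Aᵀ * B)ᵀ * hatMap e3) *ᵥ wi) - (e3 ⬝ᵥ ((Bᵀ * A)ᵀ * hatMap e3) *ᵥ wj) := by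
  simp [hatMap, e3, Matrix.mul_apply, dotProduct, mulVec, Fin.sum_univ_three, transpose_apply]
  ring

lemma neg_one_le_22 (A B : Matrix (Fin 3) (Fin 3) ℝ) (hA : SO3 A) (hB : SO3 B) :
    -1 ≤ (Aᵀ * B) 2 2 := by
  have hA' : A * Aᵀ = 1 := mul_eq_one_comm.mp hA.1
  have h : (Aᵀ * B)ᵀ * (Aᵀ * B) = 1 := by
    calc (Aᵀ * B)ᵀ * (Aᵀ * B) = Bᵀ * (A * Aᵀ) * B := by
          simp [Matrix.transpose_mul, Matrix.mul_assoc]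
    _ = 1 := by rw [hA']; simp [hB.1]
  have h22 : ∑ m : Fin 3, (Aᵀ * B) m 2 * (Aᵀ * B) m 2 = 1 := by
    have := congrArg (fun M => M 2 2) h
    simp [Matrix.mul_apply, Fin.sum_univ_three, Matrix.one_apply] at this
    simp only [Matrix.mul_apply, Fin.sum_univ_three, transpose_apply]
    linear_combination this
  set M := Aᵀ * B
  rw [Fin.sum_univ_three] at h22
  nlinarith [sq_nonneg (M 0 2), sq_nonneg (M 1 2), sq_nonneg (M 2 2 + 1)]


/-- Distributed collision avoidance on a sphere: under the distributed conic CBF condition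
for all distance-neighbor pairs, the safe set
`C = {(R₁,…,Rₙ) : e₃ᵀ (RᵢᵀRⱼ) e₃ ≤ cos(D_c/ρ) for all i ≠ j}` is forward invariant,
i.e. the geodesic distance `ρ·arccos(e₃ᵀ(RᵢᵀRⱼ)e₃)` stays at least `D_c`. -/
theorem stmt2
    (n : ℕ) (ρ Dc Da k : ℝ)
    (hρ : 0 < ρ) (hDc : 0 < Dc) (hDcDa : Dc < Da) (hDa : Da < ρ * Real.pi / 2) (hk : 0 < k)
    (R : Fin n → ℝ → Matrix (Fin 3) (Fin 3) ℝ) (ω : Fin n → ℝ → Fin 3 → ℝ)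
    (hSO3 : ∀ i t, SO3 (R i t))
    (hω : ∀ i, ∃ K, LipschitzWith K (ω i))
    (hdyn : ∀ i t, ∀ a b, HasDerivAt (fun s => R i s a b) ((R i t * hatMap (ω i t)) a b) t)
    (hcond : ∀ t ≥ (0 : ℝ), ∀ i j, i ≠ j →
      e3 ⬝ᵥ ((R i t)ᵀ * R j t) *ᵥ e3 ≥ Real.cos (Da / ρ) →
      e3 ⬝ᵥ (((R i t)ᵀ * R j t)ᵀ * hatMap e3) *ᵥ (ω i t) ≥
        k * (e3 ⬝ᵥ ((R i t)ᵀ * R j t) *ᵥ e3 - Real.cos (Dc / ρ)))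
    (hinit : ∀ i j, i ≠ j → e3 ⬝ᵥ ((R i 0)ᵀ * R j 0) *ᵥ e3 ≤ Real.cos (Dc / ρ)) :
    (∀ t ≥ (0 : ℝ), ∀ i j, i ≠ j →
      e3 ⬝ᵥ ((R i t)ᵀ * R j t) *ᵥ e3 ≤ Real.cos (Dc / ρ)) ∧
    (∀ t ≥ (0 : ℝ), ∀ i j, i ≠ j →
      ρ * Real.arccos (e3 ⬝ᵥ ((R i t)ᵀ * R j t) *ᵥ e3) ≥ Dc) := by
  have hπ := Real.pi_pos
  -- basic trig facts
  have hDaρ : Da / ρ < Real.pi / 2 := by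
    rw [div_lt_iff₀ hρ] at *; nlinarith [hDa]
  have hDcρpos : 0 < Dc / ρ := div_pos hDc hρ
  have hcoslt : Real.cos (Da / ρ) < Real.cos (Dc / ρ) := by
    apply Real.cos_lt_cos_of_nonneg_of_le_pi (le_of_lt hDcρpos) (by linarith) (by gcongr)
  have hDcρlt : Dc / ρ < Real.pi / 2 := lt_trans (by gcongr) hDaρ
  set c := Real.cos (Dc / ρ) with hc
  -- main safety claim
  have main : ∀ t ≥ (0 : ℝ), ∀ i j, i ≠ j →
      e3 ⬝ᵥ ((R i t)ᵀ * R j t) *ᵥ e3 ≤ c := by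
    intro t₁ ht₁ i j hij
    by_contra hgt
    push_neg at hgt
    set f : ℝ → ℝ := fun s => e3 ⬝ᵥ ((R i s)ᵀ * R j s) *ᵥ e3 with hf
    -- derivative of f
    have hderiv : ∀ x : ℝ, HasDerivAt f
        (-(e3 ⬝ᵥ (((R i x)ᵀ * R j x)ᵀ * hatMap e3) *ᵥ (ω i x))
          - (e3 ⬝ᵥ (((R j x)ᵀ * R i x)ᵀ * hatMap e3) *ᵥ (ω j x))) x := by
      intro x
      have hfe : f = fun s => ∑ m : Fin 3, R i s m 2 * R j s m 2 := by
        funext s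
        show e3 ⬝ᵥ ((R i s)ᵀ * R j s) *ᵥ e3 = _
        rw [entry22, Matrix.mul_apply]
        simp [transpose_apply]
      rw [hfe, ← derivId (R i x) (R j x) (ω i x) (ω j x)]
      exact HasDerivAt.fun_sum fun m _ => ((hdyn i x m 2).mul (hdyn j x m 2))
    have hfC : Continuous f := by
      exact Differentiable.continuous (fun x => (hderiv x).differentiableAt)
    -- the set of safe times in [0, t₁]
    set S : Set ℝ := {s | s ∈ Set.Icc 0 t₁ ∧ f s ≤ c} with hS
    have hSne : S.Nonempty := ⟨0, ⟨le_refl 0, ht₁⟩, hinit i j hij⟩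
    have hSclosed : IsClosed S := by
      apply IsClosed.inter isClosed_Icc
      exact isClosed_le hfC continuous_const
    have hSbdd : BddAbove S := ⟨t₁, fun x hx => hx.1.2⟩
    set s₀ := sSup S with hs₀
    have hs₀mem : s₀ ∈ S := hSclosed.csSup_mem hSne hSbdd
    have hs₀le : s₀ ≤ t₁ := hs₀mem.1.2
    have hs₀ne : s₀ ≠ t₁ := fun h => absurd hs₀mem.2 (by rw [h]; exact not_le.mpr hgt)
    have hs₀lt : s₀ < t₁ := lt_of_le_of_ne hs₀le hs₀ne
    have hs₀0 : 0 ≤ s₀ := hs₀mem.1.1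
    -- f > c on (s₀, t₁]
    have hgtmid : ∀ x, s₀ < x → x ≤ t₁ → c < f x := by
      intro x hx1 hx2
      by_contra hle
      push_neg at hle
      exact absurd (le_csSup hSbdd (⟨⟨le_trans hs₀0 hx1.le, hx2⟩, hle⟩ : x ∈ S)) (not_le.mpr hx1)
    -- strict antitone on [s₀, t₁]
    have hanti : StrictAntiOn f (Set.Icc s₀ t₁) := by
      apply strictAntiOn_of_deriv_neg (convex_Icc s₀ t₁) hfC.continuousOn
      intro x hx
      rw [interior_Icc] at hx
      have hx0 : (0 : ℝ) ≤ x := le_trans hs₀0 hx.1.le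
      have hfx : c < e3 ⬝ᵥ ((R i x)ᵀ * R j x) *ᵥ e3 := hgtmid x hx.1 hx.2.le
      have hnbr1 : e3 ⬝ᵥ ((R i x)ᵀ * R j x) *ᵥ e3 ≥ Real.cos (Da / ρ) := le_of_lt (lt_of_lt_of_le hcoslt hfx.le)
      have hsym : e3 ⬝ᵥ ((R j x)ᵀ * R i x) *ᵥ e3 = e3 ⬝ᵥ ((R i x)ᵀ * R j x) *ᵥ e3 := by
        rw [entry22, entry22, Matrix.mul_apply, Matrix.mul_apply]
        simp only [transpose_apply, Fin.sum_univ_three]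
        ring
      have hnbr2 : e3 ⬝ᵥ ((R j x)ᵀ * R i x) *ᵥ e3 ≥ Real.cos (Da / ρ) := by
        rw [hsym]; exact hnbr1
      have h1 := hcond x hx0 i j hij hnbr1
      have h2 := hcond x hx0 j i (Ne.symm hij) hnbr2
      rw [hsym] at h2
      rw [(hderiv x).deriv]
      have hpos : 0 < k * (e3 ⬝ᵥ ((R i x)ᵀ * R j x) *ᵥ e3 - c) := mul_pos hk (by linarith)
      linarith [h1, h2, hpos]
    have := hanti (Set.left_mem_Icc.mpr hs₀lt.le) (Set.right_mem_Icc.mpr hs₀lt.le) hs₀lt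
    have : f t₁ < f s₀ := this
    linarith [hs₀mem.2, hgt]
  refine ⟨main, fun t ht i j hij => ?_⟩
  -- arccos bound
  have hle := main t ht i j hij
  have harc : Dc / ρ ≤ Real.arccos (e3 ⬝ᵥ ((R i t)ᵀ * R j t) *ᵥ e3) := by
    have h1 : Real.arcsin (e3 ⬝ᵥ ((R i t)ᵀ * R j t) *ᵥ e3) ≤ Real.arcsin c := Real.monotone_arcsin hle
    have h2 : Real.arccos c = Dc / ρ := Real.arccos_cos (le_of_lt hDcρpos) (by linarith)
    rw [Real.arccos_eq_pi_div_two_sub_arcsin] at h2 ⊢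
    linarith
  calc Dc = ρ * (Dc / ρ) := by field_simp
  _ ≤ ρ * Real.arccos (e3 ⬝ᵥ ((R i t)ᵀ * R j t) *ᵥ e3) := by
      apply mul_le_mul_of_nonneg_left harc hρ.le
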